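/- Let X and Y be random variables on finite sets with |X| ≥ 4, and let d = SD(X|Y; X). Then I(X; Y) ≤ d · log(|X| / d) (with the convention that the bound is 0 when d = 0). -/

import Mathlib

open Finset

/-- A probability mass function on a finite sample space. -/
def IsPMF {Ω : Type} [Fintype Ω] (μ : Ω → ℝ) : Prop :=
  (∀ ω, 0 ≤ μ ω) ∧ ∑ ω, μ ω = 1

/-- Distribution of random variable `X` under `μ`. -/
noncomputable def distr {Ω α : Type} [Fintype Ω] [DecidableEq α]
    (μ : Ω → ℝ) (X : Ω → α) (x : α) : ℝ :=
  ∑ ω, if X ω = x then μ ω else 0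

/-- Shannon entropy (in bits) of random variable `X` under `μ`. -/
noncomputable def ent {Ω α : Type} [Fintype Ω] [Fintype α] [DecidableEq α]
    (μ : Ω → ℝ) (X : Ω → α) : ℝ :=
  - ∑ x, distr μ X x * Real.logb 2 (distr μ X x)

/-- Mutual information `I(X;Y)` (in bits). -/
noncomputable def mi {Ω α β : Type} [Fintype Ω] [Fintype α] [DecidableEq α]
    [Fintype β] [DecidableEq β] (μ : Ω → ℝ) (X : Ω → α) (Y : Ω → β) : ℝ :=
  ent μ X + ent μ Y - ent μ (fun ω => (X ω, Y ω))

/-- Conditional mutual information `I(X;Y|Z)` (in bits). -/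
noncomputable def cmi {Ω α β γ : Type} [Fintype Ω] [Fintype α] [DecidableEq α]
    [Fintype β] [DecidableEq β] [Fintype γ] [DecidableEq γ]
    (μ : Ω → ℝ) (X : Ω → α) (Y : Ω → β) (Z : Ω → γ) : ℝ :=
  ent μ (fun ω => (X ω, Z ω)) + ent μ (fun ω => (Y ω, Z ω))
    - ent μ (fun ω => (X ω, Y ω, Z ω)) - ent μ Z

/-- `X → Y → Z` forms a Markov chain under `μ`. -/
def Markov {Ω α β γ : Type} [Fintype Ω] [DecidableEq α] [DecidableEq β] [DecidableEq γ]
    (μ : Ω → ℝ) (X : Ω → α) (Y : Ω → β) (Z : Ω → γ) : Prop :=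
  ∀ x y z,
    distr μ (fun ω => (X ω, Y ω, Z ω)) (x, y, z) * distr μ Y y =
    distr μ (fun ω => (X ω, Y ω)) (x, y) * distr μ (fun ω => (Y ω, Z ω)) (y, z)

/-- `X` and `Y` are independent under `μ`. -/
def Indep {Ω α β : Type} [Fintype Ω] [DecidableEq α] [DecidableEq β]
    (μ : Ω → ℝ) (X : Ω → α) (Y : Ω → β) : Prop :=
  ∀ x y, distr μ (fun ω => (X ω, Y ω)) (x, y) = distr μ X x * distr μ Y y

/-- Conditional distribution `P(x | Y = y)`. -/
noncomputable def condDistr {Ω α β : Type} [Fintype Ω] [DecidableEq α] [DecidableEq β]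
    (μ : Ω → ℝ) (X : Ω → α) (Y : Ω → β) (x : α) (y : β) : ℝ :=
  if distr μ Y y = 0 then 0
  else distr μ (fun ω => (X ω, Y ω)) (x, y) / distr μ Y y

/-- Conditional statistical distance `SD(X|Y ; X)`. -/
noncomputable def sdCond {Ω α β : Type} [Fintype Ω] [Fintype α] [DecidableEq α]
    [Fintype β] [DecidableEq β] (μ : Ω → ℝ) (X : Ω → α) (Y : Ω → β) : ℝ :=
  ∑ y, distr μ Y y * ∑ x, |condDistr μ X Y x y - distr μ X x|

/-- The conditional PMF on `Ω` given the event `X = x`. -/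
noncomputable def condPMF {Ω α : Type} [Fintype Ω] [DecidableEq α]
    (μ : Ω → ℝ) (X : Ω → α) (x : α) : Ω → ℝ :=
  fun ω => if X ω = x then μ ω / distr μ X x else 0

open Real


section Scalar

variable {ι : Type*}

lemma jensen_log (s : Finset ι) (w v : ι → ℝ)
    (hw : ∀ i ∈ s, 0 ≤ w i) (hw1 : ∑ i ∈ s, w i = 1)
    (hv : ∀ i ∈ s, 0 < v i) :
    ∑ i ∈ s, w i * Real.log (v i) ≤ Real.log (∑ i ∈ s, w i * v i) := by
  have h := (strictConcaveOn_log_Ioi.concaveOn).le_map_sum hw hw1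
      (fun i hi => Set.mem_Ioi.2 (hv i hi))
  simpa [smul_eq_mul] using h

lemma pmf_le_one {α : Type*} [Fintype α] (P : α → ℝ) (h0 : ∀ x, 0 ≤ P x)
    (h1 : ∑ x, P x = 1) (x : α) : P x ≤ 1 := by
  have := Finset.single_le_sum (f := P) (fun i _ => h0 i) (Finset.mem_univ x)
  linarith [h1 ▸ this]

lemma ent_nonneg {α : Type*} [Fintype α] (P : α → ℝ) (h0 : ∀ x, 0 ≤ P x)
    (h1 : ∑ x, P x = 1) : 0 ≤ ∑ x, negMulLog (P x) :=
  Finset.sum_nonneg fun x _ => negMulLog_nonneg (h0 x) (pmf_le_one P h0 h1 x)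

lemma ent_le_log_card {α : Type*} [Fintype α] (Q : α → ℝ) (h0 : ∀ x, 0 ≤ Q x)
    (h1 : ∑ x, Q x = 1) : ∑ x, negMulLog (Q x) ≤ Real.log (Fintype.card α) := by
  classical
  set s := Finset.univ.filter (fun x => 0 < Q x) with hs
  have hzero : ∀ x ∈ Finset.univ \ s, negMulLog (Q x) = 0 := by
    intro x hx
    simp only [hs, Finset.mem_sdiff, Finset.mem_filter, Finset.mem_univ, true_and] at hx
    have : Q x = 0 := le_antisymm (not_lt.1 hx) (h0 x)
    simp [this]
  have hsum : ∑ x, negMulLog (Q x) = ∑ x ∈ s, negMulLog (Q x) := by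
    rw [← Finset.sum_subset (Finset.subset_univ s)]
    intro x hx hnx
    exact hzero x (Finset.mem_sdiff.2 ⟨hx, hnx⟩)
  have hQs : ∑ x ∈ s, Q x = 1 := by
    rw [← h1]
    apply Finset.sum_subset (Finset.subset_univ s)
    intro x hx hnx
    simp only [hs, Finset.mem_filter, Finset.mem_univ, true_and] at hnx
    exact le_antisymm (not_lt.1 hnx) (h0 x)
  have hne : s.Nonempty := by
    by_contra h
    rw [Finset.not_nonempty_iff_eq_empty] at h
    rw [h, Finset.sum_empty] at hQs
    norm_num at hQs
  have hj := jensen_log s Q (fun x => (Q x)⁻¹)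
      (fun i _ => h0 i) hQs
      (fun i hi => inv_pos.2 (Finset.mem_filter.1 hi).2)
  have hterm : ∀ x ∈ s, Q x * (Q x)⁻¹ = 1 := by
    intro x hx
    simp only [hs, Finset.mem_filter] at hx
    exact mul_inv_cancel₀ (ne_of_gt hx.2)
  rw [Finset.sum_congr rfl hterm, Finset.sum_const, nsmul_eq_mul, mul_one] at hj
  have hrw : ∑ x ∈ s, negMulLog (Q x) = ∑ x ∈ s, Q x * Real.log ((Q x)⁻¹) := by
    apply Finset.sum_congr rfl
    intro x hx
    rw [Real.log_inv]
    simp [negMulLog]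
  rw [hsum, hrw]
  refine hj.trans (Real.log_le_log (by exact_mod_cast Finset.card_pos.2 hne) ?_)
  exact_mod_cast Finset.card_le_card (Finset.subset_univ s)

lemma negMulLog_subadd {a b : ℝ} (ha : 0 ≤ a) (hb : 0 < b) :
    negMulLog (a + b) ≤ negMulLog a + negMulLog b := by
  have h1 : a * Real.log a ≤ a * Real.log (a + b) := by
    rcases eq_or_lt_of_le ha with h | h
    · simp [← h]
    · exact mul_le_mul_of_nonneg_left (Real.log_le_log h (by linarith)) ha
  have h2 : b * Real.log b ≤ b * Real.log (a + b) :=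
    mul_le_mul_of_nonneg_left (Real.log_le_log hb (by linarith)) hb.le
  simp only [negMulLog]
  nlinarith [h1, h2]

lemma a_coord {p q : ℝ} (hp : 0 ≤ p) (hpq : p < q) :
    negMulLog q - negMulLog p ≤ negMulLog (q - p) := by
  have := negMulLog_subadd hp (show (0:ℝ) < q - p by linarith)
  have hq : p + (q - p) = q := by ring
  rw [hq] at this
  linarith

lemma b_coord {p q : ℝ} (hq : 0 ≤ q) (hqp : q < p) (hp1 : p ≤ 1) :
    negMulLog q - negMulLog p ≤ q * Real.log (p / q) := by
  have hp : 0 < p := lt_of_le_of_lt hq hqp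
  rcases eq_or_lt_of_le hq with h | h
  · simp only [← h, negMulLog_zero, zero_mul, zero_sub]
    have : 0 ≤ negMulLog p := negMulLog_nonneg hp.le hp1
    linarith
  · rw [Real.log_div (ne_of_gt hp) (ne_of_gt h)]
    have hlogp : Real.log p ≤ 0 := Real.log_nonpos hp.le hp1
    simp only [negMulLog]
    nlinarith [mul_nonneg (show 0 ≤ p - q by linarith) (neg_nonneg.2 hlogp)]

lemma mono_ql {q q0 c : ℝ} (hq : 0 < q) (hle : q ≤ q0) (hc : 0 ≤ c) :
    q * Real.log ((q + c) / q) ≤ q0 * Real.log ((q0 + c) / q0) := by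
  have hq0 : 0 < q0 := lt_of_lt_of_le hq hle
  set lam := q / q0 with hlam
  have hlam0 : 0 ≤ lam := div_nonneg hq.le hq0.le
  have hlam1 : lam ≤ 1 := (div_le_one hq0).2 hle
  have hmem1 : (q + c) / q ∈ Set.Ioi (0:ℝ) := Set.mem_Ioi.2 (div_pos (by linarith) hq)
  have hmem2 : (1:ℝ) ∈ Set.Ioi (0:ℝ) := Set.mem_Ioi.2 one_pos
  have key := (strictConcaveOn_log_Ioi.concaveOn).2 hmem1 hmem2 hlam0
      (by linarith : (0:ℝ) ≤ 1 - lam) (by ring)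
  have hcomb : lam • ((q + c) / q) + (1 - lam) • (1:ℝ) = (q0 + c) / q0 := by
    simp only [smul_eq_mul, hlam]
    field_simp
    ring
  rw [hcomb] at key
  simp only [smul_eq_mul, Real.log_one, mul_zero, add_zero] at key
  have h5 := mul_le_mul_of_nonneg_left key hq0.le
  have heq : q0 * lam = q := by
    rw [hlam, mul_comm, div_mul_cancel₀ _ (ne_of_gt hq0)]
  rw [← mul_assoc, heq] at h5
  exact h5

lemma psi {s : ℝ} (h0 : 0 < s) (h2 : s ≤ 1/2) : negMulLog (1 - s) ≤ negMulLog s := by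
  have hs1 : 0 < 1 - s := by linarith
  set r := s / (1 - s) with hr
  have hr0 : 0 ≤ r := div_nonneg h0.le hs1.le
  have hr1 : r * (1 - s) = s := by rw [hr, div_mul_cancel₀ _ (ne_of_gt hs1)]
  have am := Real.geom_mean_le_arith_mean2_weighted hr0
      (by nlinarith [hr1] : 0 ≤ 1 - r) h0.le zero_le_one (by ring)
  rw [Real.one_rpow, mul_one] at am
  have h1 : s ^ r ≤ 1 - s := by nlinarith [am, hr1]
  have h2' : Real.log (s ^ r) ≤ Real.log (1 - s) :=
    Real.log_le_log (Real.rpow_pos_of_pos h0 r) h1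
  rw [Real.log_rpow h0] at h2'
  have h3 := mul_le_mul_of_nonneg_left h2' hs1.le
  have h4 : (1 - s) * (r * Real.log s) = s * Real.log s := by
    rw [show (1 - s) * (r * Real.log s) = r * (1 - s) * Real.log s from by ring, hr1]
  simp only [negMulLog]
  nlinarith [h3, h4]

lemma chord {θ : ℝ} (h1 : 1 ≤ θ) (h2 : θ ≤ 2) :
    θ * Real.log θ ≤ (θ - 1) * (2 * Real.log 2) := by
  have hconv : ConvexOn ℝ (Set.Ici (0:ℝ)) (fun x => x * Real.log x) := by
    have := concaveOn_negMulLog.neg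
    convert this using 2 with x
    case e'_12 => simp [negMulLog]
    all_goals rfl
  have key := hconv.2 (Set.mem_Ici.2 (by norm_num : (0:ℝ) ≤ 1))
      (Set.mem_Ici.2 (by norm_num : (0:ℝ) ≤ 2))
      (by linarith : (0:ℝ) ≤ 2 - θ) (by linarith : (0:ℝ) ≤ θ - 1) (by ring)
  simp only [smul_eq_mul, mul_one, Real.log_one, mul_zero, zero_add] at key
  have hx : 2 - θ + (θ - 1) * 2 = θ := by ring
  rw [hx] at key
  linarith [key]

end Scalar

lemma negMulLog_eq_mul_log_inv {t : ℝ} : negMulLog t = t * Real.log t⁻¹ := by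
  simp [negMulLog, Real.log_inv]

lemma scalar_main {α : Type} [Fintype α] [DecidableEq α] (P Q : α → ℝ)
    (hP0 : ∀ x, 0 ≤ P x) (hP1 : ∑ x, P x = 1)
    (hQ0 : ∀ x, 0 ≤ Q x) (hQ1 : ∑ x, Q x = 1)
    (hm : 4 ≤ Fintype.card α) :
    ∑ x, negMulLog (Q x) - ∑ x, negMulLog (P x) ≤
      (∑ x, |P x - Q x|) * Real.log (Fintype.card α) + negMulLog (∑ x, |P x - Q x|) := by
  classical
  set m : ℝ := (Fintype.card α : ℝ) with hmdef
  set θ : ℝ := ∑ x, |P x - Q x| with hθdef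
  have hθ0 : 0 ≤ θ := Finset.sum_nonneg fun x _ => abs_nonneg _
  have hθ2 : θ ≤ 2 := by
    have : ∀ x ∈ Finset.univ, |P x - Q x| ≤ P x + Q x := by
      intro x _
      calc |P x - Q x| ≤ |P x| + |Q x| := abs_sub _ _
        _ = P x + Q x := by rw [abs_of_nonneg (hP0 x), abs_of_nonneg (hQ0 x)]
    have h := Finset.sum_le_sum this
    rw [Finset.sum_add_distrib, hP1, hQ1] at h
    linarith [hθdef ▸ h]
  have hm0 : (0:ℝ) < m := by
    rw [hmdef]; exact_mod_cast lt_of_lt_of_le (by norm_num) hm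
  have hlogm : 2 * Real.log 2 ≤ Real.log m := by
    have h4 : (4:ℝ) ≤ m := by rw [hmdef]; exact_mod_cast hm
    calc 2 * Real.log 2 = Real.log ((2:ℝ)^(2:ℕ)) := by rw [Real.log_pow]; push_cast; ring
      _ = Real.log 4 := by norm_num
      _ ≤ Real.log m := Real.log_le_log (by norm_num) h4
  -- case split
  rcases le_or_gt 1 θ with hθ1 | hθ1
  · -- trivial case
    have hL : ∑ x, negMulLog (Q x) - ∑ x, negMulLog (P x) ≤ Real.log m := by
      have := ent_le_log_card Q hQ0 hQ1
      have := ent_nonneg P hP0 hP1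
      rw [hmdef]
      linarith [ent_le_log_card Q hQ0 hQ1, ent_nonneg P hP0 hP1]
    have hc := chord hθ1 hθ2
    have h2 : (θ - 1) * (2 * Real.log 2) ≤ (θ - 1) * Real.log m :=
      mul_le_mul_of_nonneg_left hlogm (by linarith)
    have hRHS : Real.log m ≤ θ * Real.log m + negMulLog θ := by
      simp only [negMulLog]
      nlinarith [hc, h2]
    linarith
  · rcases eq_or_lt_of_le hθ0 with hθe | hθpos
    · -- θ = 0 : P = Q
      have hPQ : ∀ x, P x = Q x := by
        intro x
        have hall := (Finset.sum_eq_zero_iff_of_nonneg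
          (fun x _ => abs_nonneg (P x - Q x))).1 hθe.symm x (Finset.mem_univ x)
        have := abs_eq_zero.1 hall
        linarith
      have hLHS : ∑ x, negMulLog (Q x) - ∑ x, negMulLog (P x) = 0 := by
        have : ∀ x ∈ Finset.univ, negMulLog (P x) = negMulLog (Q x) := fun x _ => by rw [hPQ x]
        rw [Finset.sum_congr rfl this]; ring
      rw [hLHS, ← hθe]
      simp
    · -- main case : 0 < θ < 1
      set A : Finset α := Finset.univ.filter (fun x => P x < Q x) with hA
      set nA : Finset α := Finset.univ.filter (fun x => ¬ P x < Q x) with hnA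
      set B : Finset α := Finset.univ.filter (fun x => Q x < P x) with hB
      have hBsub : B ⊆ nA := by
        intro x hx
        simp only [hB, Finset.mem_filter, Finset.mem_univ, true_and] at hx
        simp only [hnA, Finset.mem_filter, Finset.mem_univ, true_and]
        exact not_lt.2 (le_of_lt hx)
      set θA : ℝ := ∑ x ∈ A, (Q x - P x) with hθA
      set θB : ℝ := ∑ x ∈ B, (P x - Q x) with hθB
      -- θ = θA + θB
      have habs_split : θ = θA + θB := by
        have hsplit := Finset.sum_filter_add_sum_filter_not Finset.univ
          (fun x => P x < Q x) (fun x => |P x - Q x|)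
        have hAeq : ∑ x ∈ A, |P x - Q x| = θA := by
          apply Finset.sum_congr rfl
          intro x hx
          simp only [hA, Finset.mem_filter, Finset.mem_univ, true_and] at hx
          rw [abs_of_neg (by linarith)]; ring
        have hnAeq : ∑ x ∈ nA, |P x - Q x| = θB := by
          rw [hθB, ← Finset.sum_subset hBsub]
          · apply Finset.sum_congr rfl
            intro x hx
            simp only [hB, Finset.mem_filter, Finset.mem_univ, true_and] at hx
            rw [abs_of_nonneg (by linarith)]
          · intro x hx hnx
            simp only [hnA, Finset.mem_filter, Finset.mem_univ, true_and] at hx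
            simp only [hB, Finset.mem_filter, Finset.mem_univ, true_and] at hnx
            have h1 := not_lt.1 hx
            have h2 := not_lt.1 hnx
            rw [abs_of_nonneg (by linarith)]
            linarith
        rw [hθdef, ← hsplit, hAeq, hnAeq]
      -- θA = θB
      have hdiff0 : θB = θA := by
        have hzero : ∑ x, (P x - Q x) = 0 := by
          rw [Finset.sum_sub_distrib, hP1, hQ1]; ring
        have hsplit := Finset.sum_filter_add_sum_filter_not Finset.univ
          (fun x => P x < Q x) (fun x => P x - Q x)
        have hAeq : ∑ x ∈ A, (P x - Q x) = -θA := by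
          rw [hθA, ← Finset.sum_neg_distrib]
          apply Finset.sum_congr rfl
          intro x _; ring
        have hnAeq : ∑ x ∈ nA, (P x - Q x) = θB := by
          rw [hθB, ← Finset.sum_subset hBsub]
          intro x hx hnx
          simp only [hnA, Finset.mem_filter, Finset.mem_univ, true_and] at hx
          simp only [hB, Finset.mem_filter, Finset.mem_univ, true_and] at hnx
          linarith [not_lt.1 hx, not_lt.1 hnx]
        have := hsplit
        rw [hAeq, hnAeq, hzero] at this
        linarith
      have hθAval : θA = θ / 2 := by rw [habs_split, hdiff0] at *; linarith [habs_split]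
      have hθApos : 0 < θA := by rw [hθAval]; linarith
      -- decompose LHS
      have hLHSsplit : ∑ x, negMulLog (Q x) - ∑ x, negMulLog (P x) =
          (∑ x ∈ A, (negMulLog (Q x) - negMulLog (P x))) +
          (∑ x ∈ B, (negMulLog (Q x) - negMulLog (P x))) := by
        have hsplit := Finset.sum_filter_add_sum_filter_not Finset.univ
          (fun x => P x < Q x) (fun x => negMulLog (Q x) - negMulLog (P x))
        have hnAeq : ∑ x ∈ nA, (negMulLog (Q x) - negMulLog (P x)) =
            ∑ x ∈ B, (negMulLog (Q x) - negMulLog (P x)) := by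
          rw [← Finset.sum_subset hBsub]
          intro x hx hnx
          simp only [hnA, Finset.mem_filter, Finset.mem_univ, true_and] at hx
          simp only [hB, Finset.mem_filter, Finset.mem_univ, true_and] at hnx
          have : P x = Q x := le_antisymm (not_lt.1 hnx) (not_lt.1 hx)
          rw [this]; ring
        rw [← Finset.sum_sub_distrib, ← hsplit, hnAeq]
      -- A part
      have hmemA : ∀ x ∈ A, P x < Q x := fun x hx => (Finset.mem_filter.1 hx).2
      have hmemB : ∀ x ∈ B, Q x < P x := fun x hx => (Finset.mem_filter.1 hx).2
      have hSA1 : ∑ x ∈ A, (negMulLog (Q x) - negMulLog (P x)) ≤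
          ∑ x ∈ A, negMulLog (Q x - P x) :=
        Finset.sum_le_sum fun x hx => a_coord (hP0 x) (hmemA x hx)
      have hAne : A.Nonempty := by
        by_contra h
        rw [Finset.not_nonempty_iff_eq_empty] at h
        have hz : θA = 0 := by rw [hθA, h, Finset.sum_empty]
        rw [hz] at hθAval
        linarith
      have hjA := jensen_log A (fun x => (Q x - P x) / θA) (fun x => (Q x - P x)⁻¹)
        (fun i hi => div_nonneg (by linarith [hmemA i hi]) hθApos.le)
        (by rw [← Finset.sum_div, ← hθA, div_self (ne_of_gt hθApos)])
        (fun i hi => inv_pos.2 (by linarith [hmemA i hi]))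
      have hsum1 : ∑ i ∈ A, (Q i - P i) / θA * (Q i - P i)⁻¹ = (A.card : ℝ) / θA := by
        have hterm : ∀ i ∈ A, (Q i - P i) / θA * (Q i - P i)⁻¹ = 1 / θA := by
          intro i hi
          have ht : Q i - P i ≠ 0 := by have := hmemA i hi; intro h; linarith [sub_eq_zero.1 h]
          rw [div_mul_eq_mul_div, mul_inv_cancel₀ ht]
        rw [Finset.sum_congr rfl hterm, Finset.sum_const, nsmul_eq_mul]
        ring
      rw [hsum1] at hjA
      have hSA2 : ∑ x ∈ A, negMulLog (Q x - P x) ≤ θA * Real.log ((A.card : ℝ) / θA) := by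
        have hrw : ∑ x ∈ A, negMulLog (Q x - P x)
            = θA * ∑ x ∈ A, (Q x - P x) / θA * Real.log ((Q x - P x)⁻¹) := by
          rw [Finset.mul_sum]
          apply Finset.sum_congr rfl
          intro x hx
          rw [negMulLog_eq_mul_log_inv, ← mul_assoc, mul_div_cancel₀ _ (ne_of_gt hθApos)]
        rw [hrw]
        exact mul_le_mul_of_nonneg_left hjA hθApos.le
      have hcardA : (A.card : ℝ) ≤ m := by
        rw [hmdef]
        exact_mod_cast Finset.card_le_card (Finset.subset_univ A)
      have hcardApos : (0:ℝ) < (A.card : ℝ) := by exact_mod_cast Finset.card_pos.2 hAne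
      have hSA3 : θA * Real.log ((A.card : ℝ) / θA) ≤ θA * Real.log (m / θA) :=
        mul_le_mul_of_nonneg_left
          (Real.log_le_log (div_pos hcardApos hθApos)
            (div_le_div_of_nonneg_right hcardA hθApos.le)) hθApos.le
      -- B part
      have hSB1 : ∑ x ∈ B, (negMulLog (Q x) - negMulLog (P x)) ≤
          ∑ x ∈ B, Q x * Real.log (P x / Q x) :=
        Finset.sum_le_sum fun x hx => b_coord (hQ0 x) (hmemB x hx) (pmf_le_one P hP0 hP1 x)
      set B' : Finset α := B.filter (fun x => 0 < Q x) with hB'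
      have hsubB' : B' ⊆ B := Finset.filter_subset _ _
      have hSB2 : ∑ x ∈ B, Q x * Real.log (P x / Q x)
          = ∑ x ∈ B', Q x * Real.log (P x / Q x) := by
        symm
        apply Finset.sum_subset hsubB'
        intro x hx hnx
        have hq : ¬ 0 < Q x := fun h => hnx (Finset.mem_filter.2 ⟨hx, h⟩)
        have : Q x = 0 := le_antisymm (not_lt.1 hq) (hQ0 x)
        rw [this, zero_mul]
      have h1mθ : (0:ℝ) < 1 - θ/2 := by linarith
      have hSB3 : ∑ x ∈ B', Q x * Real.log (P x / Q x) ≤ negMulLog (1 - θ/2) := by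
        rcases Finset.eq_empty_or_nonempty B' with he | hne
        · rw [he, Finset.sum_empty]
          exact negMulLog_nonneg (by linarith) (by linarith)
        · set QB := ∑ x ∈ B', Q x with hQB
          set PB := ∑ x ∈ B', P x with hPB
          have hmemB' : ∀ x ∈ B', 0 < Q x ∧ Q x < P x := by
            intro x hx
            exact ⟨(Finset.mem_filter.1 hx).2, hmemB x (hsubB' hx)⟩
          have hQBpos : 0 < QB :=
            Finset.sum_pos (fun i hi => (hmemB' i hi).1) hne
          have hPBpos : 0 < PB :=
            Finset.sum_pos (fun i hi => lt_trans (hmemB' i hi).1 (hmemB' i hi).2) hne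
          have hjB := jensen_log B' (fun x => Q x / QB) (fun x => P x / Q x)
            (fun i _ => div_nonneg (hQ0 i) hQBpos.le)
            (by rw [← Finset.sum_div, ← hQB, div_self (ne_of_gt hQBpos)])
            (fun i hi => div_pos (lt_trans (hmemB' i hi).1 (hmemB' i hi).2) (hmemB' i hi).1)
          have hsplitsum : ∑ i ∈ B', Q i / QB * (P i / Q i) = PB / QB := by
            rw [hPB, Finset.sum_div]
            apply Finset.sum_congr rfl
            intro x hx
            have hq := ne_of_gt (hmemB' x hx).1
            field_simp
          rw [hsplitsum] at hjB
          have hQlog : ∑ x ∈ B', Q x * Real.log (P x / Q x)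
              = QB * ∑ x ∈ B', Q x / QB * Real.log (P x / Q x) := by
            rw [Finset.mul_sum]
            apply Finset.sum_congr rfl
            intro x hx
            rw [← mul_assoc, mul_div_cancel₀ _ (ne_of_gt hQBpos)]
          have hstep1 : ∑ x ∈ B', Q x * Real.log (P x / Q x) ≤ QB * Real.log (PB / QB) := by
            rw [hQlog]
            exact mul_le_mul_of_nonneg_left hjB hQBpos.le
          have hPBle : PB ≤ QB + θ/2 := by
            have hsub : ∑ x ∈ B', (P x - Q x) ≤ ∑ x ∈ B, (P x - Q x) :=
              Finset.sum_le_sum_of_subset_of_nonneg hsubB'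
                (fun i hi _ => by linarith [hmemB i hi])
            have hB'eq : ∑ x ∈ B', (P x - Q x) = PB - QB := by
              rw [hPB, hQB, Finset.sum_sub_distrib]
            rw [hB'eq, ← hθB] at hsub
            have hth : θB = θ/2 := by rw [hdiff0, hθAval]
            linarith
          have hQBle : QB ≤ 1 - θ/2 := by
            have hsplitQ := Finset.sum_filter_add_sum_filter_not Finset.univ
              (fun x => P x < Q x) Q
            have hB'nA : B' ⊆ nA := fun x hx => hBsub (hsubB' hx)
            have h1 : QB ≤ ∑ x ∈ nA, Q x :=
              Finset.sum_le_sum_of_subset_of_nonneg hB'nA (fun i _ _ => hQ0 i)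
            have h2 : θA ≤ ∑ x ∈ A, Q x := by
              rw [hθA]
              exact Finset.sum_le_sum (fun i _ => by linarith [hP0 i])
            have h3 : ∑ x ∈ A, Q x + ∑ x ∈ nA, Q x = 1 := by
              rw [hsplitQ]; exact hQ1
            rw [hθAval] at h2
            linarith
          have hstep2 : QB * Real.log (PB / QB) ≤ QB * Real.log ((QB + θ/2) / QB) :=
            mul_le_mul_of_nonneg_left
              (Real.log_le_log (div_pos hPBpos hQBpos)
                (div_le_div_of_nonneg_right hPBle hQBpos.le)) hQBpos.le
          have hstep3 := mono_ql hQBpos hQBle (by linarith : (0:ℝ) ≤ θ/2)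
          have hfin : (1 - θ/2) * Real.log ((1 - θ/2 + θ/2) / (1 - θ/2))
              = negMulLog (1 - θ/2) := by
            rw [show (1 - θ/2 + θ/2) = (1:ℝ) by ring, one_div, negMulLog_eq_mul_log_inv]
          rw [hfin] at hstep3
          linarith
      have hpsi : negMulLog (1 - θ/2) ≤ negMulLog (θ/2) :=
        psi (by linarith) (by linarith)
      -- final arithmetic
      have hθne : θ ≠ 0 := ne_of_gt hθpos
      have hfinal : θA * Real.log (m / θA) + negMulLog (θ/2)
          ≤ θ * Real.log m + negMulLog θ := by
        rw [hθAval]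
        have hl1 : Real.log (m / (θ/2)) = Real.log m - Real.log (θ/2) :=
          Real.log_div (ne_of_gt hm0) (by positivity)
        have hl2 : Real.log (θ/2) = Real.log θ - Real.log 2 :=
          Real.log_div hθne (by norm_num)
        simp only [negMulLog, hl1, hl2]
        linarith [mul_nonneg hθpos.le (sub_nonneg.2 hlogm)]
      rw [hSB2] at hSB1
      calc ∑ x, negMulLog (Q x) - ∑ x, negMulLog (P x)
          = (∑ x ∈ A, (negMulLog (Q x) - negMulLog (P x))) +
            (∑ x ∈ B, (negMulLog (Q x) - negMulLog (P x))) := hLHSsplit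
        _ ≤ θA * Real.log (m / θA) + negMulLog (1 - θ/2) := by
            linarith [hSA1, hSA2, hSA3, hSB1, hSB3]
        _ ≤ θA * Real.log (m / θA) + negMulLog (θ/2) := by linarith
        _ ≤ θ * Real.log m + negMulLog θ := hfinal

section Prob

variable {Ω α β : Type} [Fintype Ω] [Fintype α] [DecidableEq α] [Fintype β] [DecidableEq β]

lemma distr_nonneg (μ : Ω → ℝ) (hμ : IsPMF μ) (X : Ω → α) (x : α) : 0 ≤ distr μ X x := by
  unfold distr
  apply Finset.sum_nonneg
  intro ω _
  split_ifs
  · exact hμ.1 ω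
  · exact le_refl 0

lemma sum_distr (μ : Ω → ℝ) (hμ : IsPMF μ) (X : Ω → α) : ∑ x, distr μ X x = 1 := by
  unfold distr
  rw [Finset.sum_comm]
  calc ∑ ω, ∑ x, (if X ω = x then μ ω else 0) = ∑ ω, μ ω := by
        apply Finset.sum_congr rfl
        intro ω _
        simp [Finset.sum_ite_eq]
    _ = 1 := hμ.2

lemma sum_joint (μ : Ω → ℝ) (X : Ω → α) (Y : Ω → β) (y : β) :
    ∑ x, distr μ (fun ω => (X ω, Y ω)) (x, y) = distr μ Y y := by
  unfold distr
  rw [Finset.sum_comm]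
  apply Finset.sum_congr rfl
  intro ω _
  by_cases h : Y ω = y
  · simp [Prod.ext_iff, h, Finset.sum_ite_eq]
  · simp [Prod.ext_iff, h]

lemma joint_eq (μ : Ω → ℝ) (hμ : IsPMF μ) (X : Ω → α) (Y : Ω → β) (x : α) (y : β) :
    distr μ (fun ω => (X ω, Y ω)) (x, y) = distr μ Y y * condDistr μ X Y x y := by
  unfold condDistr
  by_cases hy : distr μ Y y = 0
  · rw [if_pos hy, hy, zero_mul]
    have hs := sum_joint μ X Y y
    rw [hy] at hs
    exact (Finset.sum_eq_zero_iff_of_nonneg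
      (fun x' _ => distr_nonneg μ hμ _ _)).1 hs x (Finset.mem_univ x)
  · rw [if_neg hy, mul_comm, div_mul_cancel₀ _ hy]

lemma condDistr_nonneg (μ : Ω → ℝ) (hμ : IsPMF μ) (X : Ω → α) (Y : Ω → β) (x : α) (y : β) :
    0 ≤ condDistr μ X Y x y := by
  unfold condDistr
  split_ifs with hy
  · exact le_refl 0
  · have h1 := distr_nonneg μ hμ (fun ω => (X ω, Y ω)) (x, y)
    have h2 := distr_nonneg μ hμ Y y
    exact div_nonneg h1 h2

lemma sum_condDistr (μ : Ω → ℝ) (X : Ω → α) (Y : Ω → β) {y : β}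
    (hy : distr μ Y y ≠ 0) : ∑ x, condDistr μ X Y x y = 1 := by
  unfold condDistr
  simp only [if_neg hy]
  rw [← Finset.sum_div, sum_joint μ X Y y, div_self hy]

lemma ent_eq {γ : Type} [Fintype γ] [DecidableEq γ] (μ : Ω → ℝ) (Z : Ω → γ) :
    ent μ Z = (∑ z, negMulLog (distr μ Z z)) / Real.log 2 := by
  unfold ent
  rw [Finset.sum_div, ← Finset.sum_neg_distrib]
  apply Finset.sum_congr rfl
  intro z _
  simp only [Real.logb, negMulLog]
  ring

lemma chain_rule (μ : Ω → ℝ) (hμ : IsPMF μ) (X : Ω → α) (Y : Ω → β) :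
    ∑ z : α × β, negMulLog (distr μ (fun ω => (X ω, Y ω)) z)
      = ∑ y, negMulLog (distr μ Y y)
        + ∑ y, distr μ Y y * ∑ x, negMulLog (condDistr μ X Y x y) := by
  rw [Fintype.sum_prod_type, Finset.sum_comm]
  have hyterm : ∀ y ∈ Finset.univ, ∑ x, negMulLog (distr μ (fun ω => (X ω, Y ω)) (x, y))
      = negMulLog (distr μ Y y) + distr μ Y y * ∑ x, negMulLog (condDistr μ X Y x y) := by
    intro y _
    by_cases hy : distr μ Y y = 0
    · have hz : ∀ x, distr μ (fun ω => (X ω, Y ω)) (x, y) = 0 := by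
        intro x
        rw [joint_eq μ hμ X Y x y, hy, zero_mul]
      simp [hz, hy]
    · calc ∑ x, negMulLog (distr μ (fun ω => (X ω, Y ω)) (x, y))
          = ∑ x, (condDistr μ X Y x y * negMulLog (distr μ Y y)
              + distr μ Y y * negMulLog (condDistr μ X Y x y)) := by
            apply Finset.sum_congr rfl
            intro x _
            rw [joint_eq μ hμ X Y x y, negMulLog_mul]
        _ = negMulLog (distr μ Y y) + distr μ Y y * ∑ x, negMulLog (condDistr μ X Y x y) := by
            rw [Finset.sum_add_distrib, ← Finset.sum_mul, sum_condDistr μ X Y hy, one_mul,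
              ← Finset.mul_sum]
  rw [Finset.sum_congr rfl hyterm, Finset.sum_add_distrib]

end Prob


/-- upper bound of the Csiszár lemma: for finite `X, Y` with `|𝒳| ≥ 4`
and `d = SD(X|Y;X)`, one has `I(X;Y) ≤ d · log₂(|𝒳|/d)` (the bound being `0` when `d = 0`). -/
theorem stmt6 {Ω α β : Type} [Fintype Ω] [Fintype α] [DecidableEq α]
    [Fintype β] [DecidableEq β]
    (μ : Ω → ℝ) (hμ : IsPMF μ) (X : Ω → α) (Y : Ω → β)
    (hcard : 4 ≤ Fintype.card α) :
    mi μ X Y ≤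
      if sdCond μ X Y = 0 then 0
      else sdCond μ X Y * Real.logb 2 ((Fintype.card α : ℝ) / sdCond μ X Y) := by
  classical
  set m : ℝ := (Fintype.card α : ℝ) with hmdef
  have hm0 : (0:ℝ) < m := by
    rw [hmdef]; exact_mod_cast lt_of_lt_of_le (by norm_num) hcard
  have hlogm0 : 0 ≤ Real.log m := Real.log_nonneg (by
    rw [hmdef]; exact_mod_cast le_trans (by norm_num) hcard)
  have hlog2 : 0 < Real.log 2 := Real.log_pos (by norm_num)
  set θ : β → ℝ := fun y => ∑ x, |condDistr μ X Y x y - distr μ X x| with hθdef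
  have hθ0 : ∀ y, 0 ≤ θ y := fun y => Finset.sum_nonneg fun x _ => abs_nonneg _
  set g : ℝ → ℝ := fun t => Real.log m * t + negMulLog t with hgdef
  set HQ : ℝ := ∑ x, negMulLog (distr μ X x) with hHQ
  set Hc : β → ℝ := fun y => ∑ x, negMulLog (condDistr μ X Y x y) with hHc
  -- mutual information identity
  have hmi : mi μ X Y = (∑ y, distr μ Y y * (HQ - Hc y)) / Real.log 2 := by
    unfold mi
    rw [ent_eq μ X, ent_eq μ Y, ent_eq μ (fun ω => (X ω, Y ω)), chain_rule μ hμ X Y]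
    have hsum : ∑ y, distr μ Y y * (HQ - Hc y)
        = HQ - ∑ y, distr μ Y y * Hc y := by
      have h1 : ∀ y ∈ Finset.univ, distr μ Y y * (HQ - Hc y)
          = distr μ Y y * HQ - distr μ Y y * Hc y := fun y _ => by ring
      rw [Finset.sum_congr rfl h1, Finset.sum_sub_distrib, ← Finset.sum_mul,
        sum_distr μ hμ Y, one_mul]
    rw [hsum]
    ring
  -- per-y bound
  have hper : ∀ y ∈ Finset.univ,
      distr μ Y y * (HQ - Hc y) ≤ distr μ Y y * g (θ y) := by
    intro y _
    rcases eq_or_lt_of_le (distr_nonneg μ hμ Y y) with hy | hy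
    · rw [← hy, zero_mul, zero_mul]
    · apply mul_le_mul_of_nonneg_left _ hy.le
      have hpmf : ∑ x, condDistr μ X Y x y = 1 :=
        sum_condDistr μ X Y (ne_of_gt hy)
      have hsc := scalar_main (fun x => condDistr μ X Y x y) (distr μ X)
        (fun x => condDistr_nonneg μ hμ X Y x y) hpmf
        (fun x => distr_nonneg μ hμ X x) (sum_distr μ hμ X) hcard
      rw [hHQ, hHc, hgdef, hθdef]
      simp only []
      linarith [hsc]
  -- Jensen over y
  have hgconc : ConcaveOn ℝ (Set.Ici (0:ℝ)) g := by
    have h1 : ConcaveOn ℝ (Set.Ici (0:ℝ)) (fun t : ℝ => Real.log m * t) := by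
      have := (concaveOn_id (convex_Ici (0:ℝ))).smul hlogm0
      simpa [smul_eq_mul] using this
    rw [hgdef]
    exact h1.add concaveOn_negMulLog
  have hjen := hgconc.le_map_sum (t := Finset.univ) (w := distr μ Y) (p := θ)
    (fun y _ => distr_nonneg μ hμ Y y) (sum_distr μ hμ Y)
    (fun y _ => Set.mem_Ici.2 (hθ0 y))
  simp only [smul_eq_mul] at hjen
  have hd : sdCond μ X Y = ∑ y, distr μ Y y * θ y := rfl
  have hmile : mi μ X Y ≤ g (sdCond μ X Y) / Real.log 2 := by
    rw [hmi, hd]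
    apply div_le_div_of_nonneg_right _ hlog2.le
    calc ∑ y, distr μ Y y * (HQ - Hc y) ≤ ∑ y, distr μ Y y * g (θ y) :=
          Finset.sum_le_sum hper
      _ ≤ g (∑ y, distr μ Y y * θ y) := hjen
  by_cases hdz : sdCond μ X Y = 0
  · rw [if_pos hdz]
    rw [hdz] at hmile
    simpa [hgdef] using hmile
  · rw [if_neg hdz]
    have hdpos : 0 < sdCond μ X Y := by
      rcases eq_or_lt_of_le (Finset.sum_nonneg
        (fun y _ => mul_nonneg (distr_nonneg μ hμ Y y) (hθ0 y)) :
          (0:ℝ) ≤ ∑ y, distr μ Y y * θ y) with h | h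
      · exact absurd (hd.trans h.symm) hdz
      · exact hd ▸ h
    refine hmile.trans (le_of_eq ?_)
    rw [hgdef]
    simp only [negMulLog, Real.logb, Real.log_div (ne_of_gt hm0) (ne_of_gt hdpos)]
    field_simp
    ring
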